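/- For a positive real vector B=(b_1,…,b_l) define ω(B) = ∏_{i=1}^l b_i^{b_i}/Γ(b_i+1). Then for every positive real l-vector B with |B| = b_1+…+b_l and s = |B|/l, one has ω(B) ≥ (s^s/Γ(s+1))^l, i.e., ω(B) ≥ ω(s,…,s). -/

import Mathlib

open scoped BigOperators

/-- `ω(B) = ∏ i, B i ^ (B i) / Γ(B i + 1)` for a positive real vector `B`. -/
noncomputable def omegaReal {l : ℕ} (B : Fin l → ℝ) : ℝ :=
  ∏ i, B i ^ B i / Real.Gamma (B i + 1)

open Filter Finset

/-- Approximant to `x log x - log Γ(x+1)` built from Euler's Gamma sequence. -/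
noncomputable def Gfun (n : ℕ) (x : ℝ) : ℝ :=
  x * Real.log x + ∑ j ∈ Finset.range (n+1), Real.log (x + (1 + (j:ℝ)))
    - Real.log n * x - (Real.log n + Real.log (Nat.factorial n))

lemma Gfun_hasDeriv1 (n : ℕ) {x : ℝ} (hx : 0 < x) :
    HasDerivAt (Gfun n)
      (Real.log x + 1 + ∑ j ∈ Finset.range (n+1), (x + (1 + (j:ℝ)))⁻¹ - Real.log n) x := by
  have h1 := Real.hasDerivAt_mul_log hx.ne'
  have h2 : HasDerivAt (fun x : ℝ => ∑ j ∈ Finset.range (n+1), Real.log (x + (1 + (j:ℝ))))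
      (∑ j ∈ Finset.range (n+1), (x + (1 + (j:ℝ)))⁻¹) x := by
    apply HasDerivAt.fun_sum
    intro j _
    have hpos : (0:ℝ) < x + (1 + (j:ℝ)) := by positivity
    have := ((hasDerivAt_id x).add_const (1 + (j:ℝ))).log hpos.ne'
    simpa using this
  have h3 : HasDerivAt (fun x : ℝ => Real.log n * x) (Real.log n) x := by
    simpa using (hasDerivAt_id x).const_mul (Real.log n)
  exact ((h1.add h2).sub h3).sub_const (Real.log n + Real.log (Nat.factorial n))

lemma Gfun_hasDeriv2 (n : ℕ) {x : ℝ} (hx : 0 < x) :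
    HasDerivAt (fun x => Real.log x + 1 + ∑ j ∈ Finset.range (n+1), (x + (1 + (j:ℝ)))⁻¹
        - Real.log n)
      (x⁻¹ + ∑ j ∈ Finset.range (n+1), (-1 / (x + (1 + (j:ℝ)))^2)) x := by
  have h1 : HasDerivAt (fun x : ℝ => Real.log x + 1) x⁻¹ x :=
    (Real.hasDerivAt_log hx.ne').add_const 1
  have h2 : HasDerivAt (fun x : ℝ => ∑ j ∈ Finset.range (n+1), (x + (1 + (j:ℝ)))⁻¹)
      (∑ j ∈ Finset.range (n+1), (-1 / (x + (1 + (j:ℝ)))^2)) x := by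
    apply HasDerivAt.fun_sum
    intro j _
    have hpos : (0:ℝ) < x + (1 + (j:ℝ)) := by positivity
    have := ((hasDerivAt_id x).add_const (1 + (j:ℝ))).inv hpos.ne'
    simpa [Pi.inv_def] using this
  simpa using (h1.add h2).sub_const (Real.log n)

lemma Gfun_deriv2_nonneg (n : ℕ) {x : ℝ} (hx : 0 < x) :
    0 ≤ x⁻¹ + ∑ j ∈ Finset.range (n+1), (-1 / (x + (1 + (j:ℝ)))^2) := by
  have key : ∑ j ∈ Finset.range (n+1), (1 / (x + (1 + (j:ℝ)))^2) ≤ x⁻¹ := by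
    have tele : ∑ j ∈ Finset.range (n+1), ((x + (j:ℝ))⁻¹ - (x + ((j:ℝ)+1))⁻¹)
        = x⁻¹ - (x + ((n:ℝ)+1))⁻¹ := by
      have := Finset.sum_range_sub' (f := fun j : ℕ => (x + (j:ℝ))⁻¹) (n+1)
      push_cast at this ⊢
      simpa using this
    have hle : ∑ j ∈ Finset.range (n+1), (1 / (x + (1 + (j:ℝ)))^2)
        ≤ ∑ j ∈ Finset.range (n+1), ((x + (j:ℝ))⁻¹ - (x + ((j:ℝ)+1))⁻¹) := by
      apply Finset.sum_le_sum
      intro j _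
      have hj : (0:ℝ) ≤ (j:ℝ) := Nat.cast_nonneg j
      have h0 : (0:ℝ) < x + (j:ℝ) := by positivity
      have h1 : (0:ℝ) < x + ((j:ℝ)+1) := by positivity
      have heq : (x + (j:ℝ))⁻¹ - (x + ((j:ℝ)+1))⁻¹ = 1 / ((x + (j:ℝ)) * (x + ((j:ℝ)+1))) := by
        field_simp
        try ring
      rw [heq]
      apply div_le_div_of_nonneg_left one_pos.le (by positivity)
      nlinarith
    refine hle.trans ?_
    rw [tele]
    have : (0:ℝ) < (x + ((n:ℝ)+1))⁻¹ := by positivity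
    linarith
  have : ∑ j ∈ Finset.range (n+1), (-1 / (x + (1 + (j:ℝ)))^2)
      = -∑ j ∈ Finset.range (n+1), (1 / (x + (1 + (j:ℝ)))^2) := by
    rw [← Finset.sum_neg_distrib]
    congr 1; ext j; ring
  rw [this]
  linarith

lemma Gfun_convexOn (n : ℕ) : ConvexOn ℝ (Set.Ioi 0) (Gfun n) := by
  have hi : interior (Set.Ioi (0:ℝ)) = Set.Ioi 0 := interior_Ioi
  refine convexOn_of_hasDerivWithinAt2_nonneg (convex_Ioi 0)
    (f' := fun x => Real.log x + 1 + ∑ j ∈ Finset.range (n+1), (x + (1 + (j:ℝ)))⁻¹ - Real.log n)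
    (f'' := fun x => x⁻¹ + ∑ j ∈ Finset.range (n+1), (-1 / (x + (1 + (j:ℝ)))^2)) ?_ ?_ ?_ ?_
  · intro x hx
    exact (Gfun_hasDeriv1 n hx).continuousAt.continuousWithinAt
  · intro x hx
    rw [hi] at hx
    exact (Gfun_hasDeriv1 n hx).hasDerivWithinAt
  · intro x hx
    rw [hi] at hx
    exact (Gfun_hasDeriv2 n hx).hasDerivWithinAt
  · intro x hx
    rw [hi] at hx
    exact Gfun_deriv2_nonneg n hx

/-- The function whose convexity drives the whole inequality. -/
noncomputable def gfun (x : ℝ) : ℝ := x * Real.log x - Real.log (Real.Gamma (x + 1))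

lemma Gfun_eq (n : ℕ) (hn : 1 ≤ n) {z : ℝ} (hz : 0 < z) :
    Gfun n z = z * Real.log z - Real.log (Real.GammaSeq (z+1) n) := by
  have hn0 : (0:ℝ) < (n:ℝ) := by exact_mod_cast hn
  have hprod : ∀ j ∈ Finset.range (n+1), z + 1 + (j:ℝ) ≠ 0 := by
    intro j _
    positivity
  have hlog : Real.log (Real.GammaSeq (z+1) n)
      = (z+1) * Real.log n + Real.log (Nat.factorial n)
        - ∑ j ∈ Finset.range (n+1), Real.log (z + 1 + (j:ℝ)) := by
    rw [Real.GammaSeq]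
    rw [Real.log_div (by positivity) (Finset.prod_ne_zero_iff.mpr hprod)]
    rw [Real.log_mul (by positivity) (by positivity : ((Nat.factorial n : ℝ)) ≠ 0)]
    rw [Real.log_rpow hn0, Real.log_prod hprod]
  rw [hlog, Gfun]
  have : ∀ j : ℕ, z + (1 + (j:ℝ)) = z + 1 + (j:ℝ) := by intro j; ring
  simp_rw [this]
  ring

lemma Gfun_tendsto {z : ℝ} (hz : 0 < z) :
    Tendsto (fun n => Gfun n z) atTop (nhds (gfun z)) := by
  have hΓ : 0 < Real.Gamma (z + 1) := Real.Gamma_pos_of_pos (by positivity)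
  have h1 : Tendsto (fun n => Real.log (Real.GammaSeq (z+1) n)) atTop
      (nhds (Real.log (Real.Gamma (z+1)))) :=
    ((Real.continuousAt_log hΓ.ne').tendsto).comp (Real.GammaSeq_tendsto_Gamma (z+1))
  have h2 : Tendsto (fun n => z * Real.log z - Real.log (Real.GammaSeq (z+1) n)) atTop
      (nhds (gfun z)) := (tendsto_const_nhds.sub h1)
  refine h2.congr' ?_
  filter_upwards [eventually_ge_atTop 1] with n hn
  exact (Gfun_eq n hn hz).symm

lemma gfun_convexOn : ConvexOn ℝ (Set.Ioi (0:ℝ)) gfun := by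
  refine ⟨convex_Ioi 0, ?_⟩
  intro x hx y hy a b ha hb hab
  have hxy : a • x + b • y ∈ Set.Ioi (0:ℝ) := (convex_Ioi 0) hx hy ha hb hab
  simp only [smul_eq_mul]
  refine le_of_tendsto_of_tendsto' (g := fun n => a * Gfun n x + b * Gfun n y)
    (Gfun_tendsto hxy) ?_ ?_
  · exact ((Gfun_tendsto hx).const_mul a).add ((Gfun_tendsto hy).const_mul b)
  · intro n
    simpa using (Gfun_convexOn n).2 hx hy ha hb hab

lemma exp_gfun {b : ℝ} (hb : 0 < b) :
    Real.exp (gfun b) = b ^ b / Real.Gamma (b + 1) := by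
  have hΓ : 0 < Real.Gamma (b + 1) := Real.Gamma_pos_of_pos (by positivity)
  rw [gfun, Real.exp_sub, Real.exp_log hΓ, Real.rpow_def_of_pos hb, mul_comm]

theorem omegaReal_ge_uniform {l : ℕ} (B : Fin l → ℝ) (hB : ∀ i, 0 < B i)
    (s : ℝ) (hs : s = (∑ i, B i) / (l : ℝ)) :
    omegaReal B ≥ (s ^ s / Real.Gamma (s + 1)) ^ l := by
  rcases Nat.eq_zero_or_pos l with hl | hl
  · subst hl
    simp [omegaReal]
  have hl0 : (0:ℝ) < (l:ℝ) := by exact_mod_cast hl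
  have hsum : 0 < ∑ i, B i :=
    Finset.sum_pos (fun i _ => hB i) (Finset.univ_nonempty_iff.mpr ⟨⟨0, hl⟩⟩)
  have hspos : 0 < s := by rw [hs]; positivity
  -- Jensen's inequality
  have hj := gfun_convexOn.map_sum_le (t := Finset.univ) (w := fun _ : Fin l => (l:ℝ)⁻¹)
    (p := B) (fun i _ => by positivity) (by simp [Finset.card_univ]; field_simp)
    (fun i _ => hB i)
  have hsv : ∑ i, (l:ℝ)⁻¹ • B i = s := by
    rw [← Finset.smul_sum, hs, smul_eq_mul]
    field_simp
  rw [hsv] at hj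
  have hj2 : (l:ℝ) * gfun s ≤ ∑ i, gfun (B i) := by
    have := mul_le_mul_of_nonneg_left hj hl0.le
    calc (l:ℝ) * gfun s ≤ (l:ℝ) * ∑ i, (l:ℝ)⁻¹ • gfun (B i) := this
      _ = ∑ i, gfun (B i) := by
          rw [← Finset.smul_sum, smul_eq_mul, ← mul_assoc, mul_inv_cancel₀ hl0.ne', one_mul]
  -- exponentiate both sides
  have key : Real.exp ((l:ℝ) * gfun s) ≤ Real.exp (∑ i, gfun (B i)) := Real.exp_le_exp.mpr hj2
  rw [Real.exp_sum] at key
  have h1 : ∏ i, Real.exp (gfun (B i)) = omegaReal B := by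
    rw [omegaReal]
    exact Finset.prod_congr rfl fun i _ => exp_gfun (hB i)
  have h2 : Real.exp ((l:ℝ) * gfun s) = (s ^ s / Real.Gamma (s + 1)) ^ l := by
    rw [Real.exp_nat_mul, exp_gfun hspos]
  rw [h1, h2] at key
  exact key
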